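/- Let t > 0 and a ∈ ℝ. Consider admissible functions f : ℝ → ℝ of the form f(τ) = ∫_0^τ g(s) ds for some measurable, essentially bounded g : ℝ → ℝ (so f is absolutely continuous with f(0) = 0), subject to the constraint ∫_0^t f(τ) dτ = a. Then the infimum of ∫_0^t f(τ)² dτ over all admissible f equals a²/t, and if a ≠ 0 this infimum is not attained by any admissible f. (The computation of the minimal 2-jet in the Martinet example: the value function equals (1/t)(c⁽¹⁾ − b⁽¹⁾_y)² and the minimum is never attained.) -/

import Mathlib

open MeasureTheory

noncomputable section

/-- An admissible function: `f(τ) = ∫_0^τ g(s) ds` for some measurable,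
essentially bounded `g : ℝ → ℝ`, so that `f` is absolutely continuous with
`f 0 = 0`. -/
def Admissible (f : ℝ → ℝ) : Prop :=
  ∃ g : ℝ → ℝ, Measurable g ∧ (∃ C : ℝ, ∀ᵐ s : ℝ, |g s| ≤ C) ∧
    ∀ τ : ℝ, f τ = ∫ s in (0:ℝ)..τ, g s

lemma Admissible.continuous {f : ℝ → ℝ} (hf : Admissible f) : Continuous f := by
  obtain ⟨g, hg, ⟨C, hC⟩, hrep⟩ := hf
  have hint : ∀ a b : ℝ, IntervalIntegrable g volume a b := by
    intro a b
    rw [intervalIntegrable_iff]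
    refine Integrable.mono' (g := fun _ => C) ?_ hg.aestronglyMeasurable.restrict ?_
    · exact integrableOn_const measure_Ioc_lt_top.ne
    · filter_upwards [ae_restrict_of_ae hC] with s hs
      simpa [Real.norm_eq_abs] using hs
  have hfe : f = fun τ => ∫ s in (0:ℝ)..τ, g s := funext hrep
  rw [hfe]
  exact intervalIntegral.continuous_primitive hint 0

lemma Admissible.zero {f : ℝ → ℝ} (hf : Admissible f) : f 0 = 0 := by
  obtain ⟨g, _, _, hrep⟩ := hf
  simpa using hrep 0

lemma expand_sq (f : ℝ → ℝ) (hf : Continuous f) (t c : ℝ) :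
    (∫ τ in (0:ℝ)..t, (f τ - c)^2)
      = (∫ τ in (0:ℝ)..t, (f τ)^2) - 2*c*(∫ τ in (0:ℝ)..t, f τ) + c^2 * t := by
  have h1 : IntervalIntegrable (fun τ => (f τ)^2) volume 0 t :=
    ((hf.pow 2)).intervalIntegrable 0 t
  have h2 : IntervalIntegrable (fun τ => 2*c*f τ) volume 0 t :=
    ((continuous_const.mul hf)).intervalIntegrable 0 t
  have h3 : IntervalIntegrable (fun _ : ℝ => c^2) volume 0 t := intervalIntegrable_const
  have key : (fun τ => (f τ - c)^2) = fun τ => ((f τ)^2 - 2*c*f τ) + c^2 := by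
    funext τ; ring
  rw [key, intervalIntegral.integral_add (h1.sub h2) h3,
    intervalIntegral.integral_sub h1 h2, intervalIntegral.integral_const_mul,
    intervalIntegral.integral_const]
  simp [smul_eq_mul]; ring

lemma lower_bound (t : ℝ) (ht : 0 < t) (a : ℝ) {c : ℝ}
    (hc : c ∈ { c : ℝ | ∃ f : ℝ → ℝ, Admissible f ∧
        (∫ τ in (0:ℝ)..t, f τ) = a ∧ (∫ τ in (0:ℝ)..t, (f τ) ^ 2) = c }) :
    a ^ 2 / t ≤ c := by
  obtain ⟨f, hadm, hI, hQ⟩ := hc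
  have hcont := hadm.continuous
  have hnn : 0 ≤ ∫ τ in (0:ℝ)..t, (f τ - a/t)^2 :=
    intervalIntegral.integral_nonneg ht.le (fun u _ => sq_nonneg _)
  rw [expand_sq f hcont t (a/t), hI, hQ] at hnn
  have ht' : t ≠ 0 := ht.ne'
  have e1 : (a/t)^2 * t = a^2/t := by field_simp
  have e2 : 2*(a/t)*a = 2*(a^2/t) := by field_simp
  linarith [hnn, e1, e2]

/-- Membership of the approximate values. -/
lemma mem_value (t : ℝ) (ht : 0 < t) (a : ℝ) (δ : ℝ) (hδ : 0 < δ) (hδt : δ ≤ t) :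
    a^2 * (t - 2*δ/3) / (t - δ/2)^2 ∈ { c : ℝ | ∃ f : ℝ → ℝ, Admissible f ∧
        (∫ τ in (0:ℝ)..t, f τ) = a ∧ (∫ τ in (0:ℝ)..t, (f τ) ^ 2) = c } := by
  have hden : (0:ℝ) < t - δ/2 := by linarith
  set k : ℝ := a / (δ * (t - δ/2)) with hk
  set g : ℝ → ℝ := Set.indicator {x : ℝ | x ≤ δ} (fun _ => k) with hgdef
  set f : ℝ → ℝ := fun τ => k * min τ δ with hfdef
  have hrep : ∀ τ : ℝ, f τ = ∫ s in (0:ℝ)..τ, g s := by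
    intro τ
    rcases le_or_gt τ δ with hτ | hτ
    · have hcg : ∀ s ∈ Set.uIcc (0:ℝ) τ, g s = k := by
        intro s hs
        apply Set.indicator_of_mem
        have hs' : s ≤ max 0 τ := hs.2
        have : max 0 τ ≤ δ := max_le hδ.le hτ
        exact hs'.trans this
      have : (∫ s in (0:ℝ)..τ, g s) = ∫ _ in (0:ℝ)..τ, k :=
        intervalIntegral.integral_congr hcg
      rw [this, intervalIntegral.integral_const]
      simp [hfdef, min_eq_left hτ, smul_eq_mul]; ring
    · have hmem : δ ∈ Set.Icc (0:ℝ) τ := ⟨hδ.le, hτ.le⟩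
      have := intervalIntegral.integral_indicator (f := fun _ : ℝ => k)
        (μ := volume) hmem
      rw [hgdef, this, intervalIntegral.integral_const]
      simp [hfdef, min_eq_right hτ.le, smul_eq_mul]; ring
  have hadm : Admissible f := by
    refine ⟨g, ?_, ⟨|k|, Filter.Eventually.of_forall fun s => ?_⟩, hrep⟩
    · exact Measurable.indicator measurable_const measurableSet_Iic
    · by_cases hs : s ∈ {x : ℝ | x ≤ δ} <;>
        simp [hgdef, Set.indicator_apply, hs, abs_nonneg]
  have hfc : Continuous f := hadm.continuous
  -- compute the two integrals by splitting at δ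
  have hint1 : IntervalIntegrable f volume 0 δ := hfc.intervalIntegrable 0 δ
  have hint2 : IntervalIntegrable f volume δ t := hfc.intervalIntegrable δ t
  have hsplit : (∫ τ in (0:ℝ)..δ, f τ) + (∫ τ in δ..t, f τ) = ∫ τ in (0:ℝ)..t, f τ :=
    intervalIntegral.integral_add_adjacent_intervals hint1 hint2
  have i1 : (∫ τ in (0:ℝ)..δ, f τ) = k * (δ^2/2) := by
    have hcg : ∀ τ ∈ Set.uIcc (0:ℝ) δ, f τ = k * τ := by
      intro τ hτ
      have h2 : τ ≤ max 0 δ := hτ.2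
      rw [max_eq_right hδ.le] at h2
      simp [hfdef, min_eq_left h2]
    rw [intervalIntegral.integral_congr hcg, intervalIntegral.integral_const_mul,
      integral_id]
    ring
  have i2 : (∫ τ in δ..t, f τ) = k * δ * (t - δ) := by
    have hcg : ∀ τ ∈ Set.uIcc δ t, f τ = k * δ := by
      intro τ hτ
      have h1 : min δ t ≤ τ := hτ.1
      rw [min_eq_left hδt] at h1
      simp [hfdef, min_eq_right h1]
    rw [intervalIntegral.integral_congr hcg, intervalIntegral.integral_const]
    simp [smul_eq_mul]; ring
  have hI : (∫ τ in (0:ℝ)..t, f τ) = a := by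
    rw [← hsplit, i1, i2]
    have hδd : δ * (t - δ/2) ≠ 0 := by positivity
    have : k * (δ^2/2) + k * δ * (t - δ) = k * (δ * (t - δ/2)) := by ring
    rw [this, hk, div_mul_cancel₀ _ hδd]
  have hint1' : IntervalIntegrable (fun τ => (f τ)^2) volume 0 δ :=
    (hfc.pow 2).intervalIntegrable 0 δ
  have hint2' : IntervalIntegrable (fun τ => (f τ)^2) volume δ t :=
    (hfc.pow 2).intervalIntegrable δ t
  have hsplit' : (∫ τ in (0:ℝ)..δ, (f τ)^2) + (∫ τ in δ..t, (f τ)^2)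
      = ∫ τ in (0:ℝ)..t, (f τ)^2 :=
    intervalIntegral.integral_add_adjacent_intervals hint1' hint2'
  have j1 : (∫ τ in (0:ℝ)..δ, (f τ)^2) = k^2 * (δ^3/3) := by
    have hcg : ∀ τ ∈ Set.uIcc (0:ℝ) δ, (f τ)^2 = k^2 * τ^2 := by
      intro τ hτ
      have h2 : τ ≤ max 0 δ := hτ.2
      rw [max_eq_right hδ.le] at h2
      simp [hfdef, min_eq_left h2]; ring
    rw [intervalIntegral.integral_congr hcg, intervalIntegral.integral_const_mul,
      integral_pow]
    norm_num
  have j2 : (∫ τ in δ..t, (f τ)^2) = k^2 * δ^2 * (t - δ) := by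
    have hcg : ∀ τ ∈ Set.uIcc δ t, (f τ)^2 = k^2 * δ^2 := by
      intro τ hτ
      have h1 : min δ t ≤ τ := hτ.1
      rw [min_eq_left hδt] at h1
      simp [hfdef, min_eq_right h1]; ring
    rw [intervalIntegral.integral_congr hcg, intervalIntegral.integral_const]
    simp [smul_eq_mul]; ring
  have hQ : (∫ τ in (0:ℝ)..t, (f τ)^2) = a^2 * (t - 2*δ/3) / (t - δ/2)^2 := by
    rw [← hsplit', j1, j2]
    have hden0 : t - δ/2 ≠ 0 := hden.ne'
    have hkδ : k * δ = a / (t - δ/2) := by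
      rw [hk, div_mul_eq_mul_div, ← div_div, mul_div_assoc, div_self hδ.ne', mul_one]
    have : k^2 * (δ^3/3) + k^2 * δ^2 * (t - δ) = (k*δ)^2 * (t - 2*δ/3) := by ring
    rw [this, hkδ, div_pow]
    ring
  exact ⟨f, hadm, hI, hQ⟩

/-- **The Martinet computation.** For `t > 0` and `a ∈ ℝ`, the infimum of
`∫_0^t f(τ)² dτ` over admissible `f` with `∫_0^t f(τ) dτ = a` equals `a²/t`,
and for `a ≠ 0` this infimum is not attained by any admissible `f`. -/
theorem martinet_minimal_two_jet (t : ℝ) (ht : 0 < t) (a : ℝ) :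
    sInf { c : ℝ | ∃ f : ℝ → ℝ, Admissible f ∧
        (∫ τ in (0:ℝ)..t, f τ) = a ∧ (∫ τ in (0:ℝ)..t, (f τ) ^ 2) = c }
      = a ^ 2 / t ∧
    (a ≠ 0 → a ^ 2 / t ∉ { c : ℝ | ∃ f : ℝ → ℝ, Admissible f ∧
        (∫ τ in (0:ℝ)..t, f τ) = a ∧ (∫ τ in (0:ℝ)..t, (f τ) ^ 2) = c }) := by
  set S := { c : ℝ | ∃ f : ℝ → ℝ, Admissible f ∧
      (∫ τ in (0:ℝ)..t, f τ) = a ∧ (∫ τ in (0:ℝ)..t, (f τ) ^ 2) = c } with hS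
  have hbdd : BddBelow S := ⟨a^2/t, fun c hc => lower_bound t ht a hc⟩
  have hne : S.Nonempty := ⟨_, mem_value t ht a t ht le_rfl⟩
  constructor
  · apply le_antisymm
    · -- sInf S ≤ a^2/t via the approximating sequence δ_n = t/(n+2)
      set δ : ℕ → ℝ := fun n => t / (n + 2) with hδdef
      have hδpos : ∀ n, 0 < δ n := fun n => by positivity
      have hδle : ∀ n, δ n ≤ t := by
        intro n
        rw [hδdef]
        rw [div_le_iff₀ (by positivity)]
        nlinarith [Nat.cast_nonneg (α := ℝ) n]
      have hδ0 : Filter.Tendsto δ Filter.atTop (nhds 0) := by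
        apply Filter.Tendsto.div_atTop (tendsto_const_nhds)
        exact Filter.tendsto_atTop_add_const_right _ 2 tendsto_natCast_atTop_atTop
      have hv : Filter.Tendsto (fun n => a^2 * (t - 2*(δ n)/3) / (t - (δ n)/2)^2)
          Filter.atTop (nhds (a^2 * (t - 2*0/3) / (t - 0/2)^2)) := by
        apply Filter.Tendsto.div
        · exact (tendsto_const_nhds.mul
            (tendsto_const_nhds.sub ((hδ0.const_mul 2).div_const 3)))
        · exact ((tendsto_const_nhds.sub (hδ0.div_const 2)).pow 2)
        · simpa using pow_ne_zero 2 ht.ne'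
      have hlim : a^2 * (t - 2*0/3) / (t - 0/2)^2 = a^2/t := by
        field_simp
        ring
      rw [hlim] at hv
      refine ge_of_tendsto' hv ?_
      intro n
      exact csInf_le hbdd (mem_value t ht a (δ n) (hδpos n) (hδle n))
    · exact le_csInf hne fun c hc => lower_bound t ht a hc
  · rintro ha ⟨f, hadm, hI, hQ⟩
    have hcont := hadm.continuous
    have hzero : (∫ τ in (0:ℝ)..t, (f τ - a/t)^2) = 0 := by
      rw [expand_sq f hcont t (a/t), hI, hQ]
      field_simp
      ring
    -- f 0 = 0, so (f - a/t)^2 is bounded below near 0 by (a/t)^2/2 > 0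
    set h : ℝ → ℝ := fun τ => (f τ - a/t)^2 with hhdef
    have hhc : Continuous h := (hcont.sub continuous_const).pow 2
    have hat : a / t ≠ 0 := div_ne_zero ha ht.ne'
    have h0 : h 0 = (a/t)^2 := by simp [hhdef, hadm.zero]
    have hpos : (0:ℝ) < (a/t)^2/2 := by positivity
    have hev : ∀ᶠ τ in nhds (0:ℝ), (a/t)^2/2 < h τ := by
      have : Filter.Tendsto h (nhds 0) (nhds (h 0)) := hhc.continuousAt
      rw [h0] at this
      exact this.eventually_const_lt (by linarith)
    obtain ⟨ε, hε, hball⟩ := Metric.eventually_nhds_iff.mp hev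
    set η : ℝ := min (ε/2) t with hηdef
    have hη0 : 0 < η := lt_min (by linarith) ht
    have hηt : η ≤ t := min_le_right _ _
    have hsub : ∀ x ∈ Set.Icc (0:ℝ) η, (a/t)^2/2 ≤ h x := by
      intro x hx
      have : dist x 0 < ε := by
        rw [Real.dist_eq, sub_zero, abs_of_nonneg hx.1]
        calc x ≤ η := hx.2
          _ ≤ ε/2 := min_le_left _ _
          _ < ε := by linarith
      exact (hball this).le
    have hi1 : η * ((a/t)^2/2) ≤ ∫ τ in (0:ℝ)..η, h τ := by
      have := intervalIntegral.integral_mono_on (μ := volume) hη0.le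
        (intervalIntegrable_const (c := (a/t)^2/2))
        (hhc.intervalIntegrable 0 η) hsub
      rwa [intervalIntegral.integral_const, smul_eq_mul, sub_zero] at this
    have hi2 : 0 ≤ ∫ τ in η..t, h τ :=
      intervalIntegral.integral_nonneg hηt fun u _ => sq_nonneg _
    have hsplit : (∫ τ in (0:ℝ)..η, h τ) + (∫ τ in η..t, h τ) = ∫ τ in (0:ℝ)..t, h τ :=
      intervalIntegral.integral_add_adjacent_intervals
        (hhc.intervalIntegrable 0 η) (hhc.intervalIntegrable η t)
    have : 0 < ∫ τ in (0:ℝ)..t, h τ := by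
      rw [← hsplit]
      have : 0 < η * ((a/t)^2/2) := by positivity
      linarith
    rw [hzero] at this
    exact lt_irrefl 0 this
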